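/- Under the change of variables τ = √2·X̃₁, q̌ = -√2(Q̌ - X̃₁), p̌ = -(1/√2)(P̌ - Q̌ + θ₂/(2(Q̌ - X̃₁))), with monodromy identifications (s_{X₁^(1),0} - s_{X₁^(2),0})² = θ₂² and s_{∞^(1),0} - s_{∞^(2),0} = -θ₂ - 2θ₁, the flow ℏ∂_τ q̌ = -2q̌p̌ - q̌² + τq̌ + θ₂, ℏ∂_τ p̌ = p̌² + 2q̌p̌ - τp̌ + θ₁ + ℏ transforms into the flow ℏ∂_{X̃₁} Q̌ = ∂Ham^{P4}/∂P̌ and ℏ∂_{X̃₁} P̌ = -∂Ham^{P4}/∂Q̌, where Ham^{P4}(Q̌,P̌) = (Q̌-X̃₁)P̌² + ℏP̌ - Q̌³ + X̃₁Q̌² - (s_{∞^(1),0} - s_{∞^(2),0} - ℏ)Q̌ - (s_{X₁^(1),0} - s_{X₁^(2),0})²/(4(Q̌ - X̃₁)). -/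

import Mathlib

/-- Under the time-dependent change of variables `τ = √2·X̃₁`,
`q̌ = -√2(Q̌ - X̃₁)`, `p̌ = -(1/√2)(P̌ - Q̌ + θ₂/(2(Q̌ - X̃₁)))`, together with the
monodromy identifications `(s_{X₁⁽¹⁾,0} - s_{X₁⁽²⁾,0})² = θ₂²` and
`s_{∞⁽¹⁾,0} - s_{∞⁽²⁾,0} = -θ₂ - 2θ₁`, the reduced `𝔤𝔩₃` flow
`ℏ∂_τ q̌ = -2q̌p̌ - q̌² + τq̌ + θ₂`, `ℏ∂_τ p̌ = p̌² + 2q̌p̌ - τp̌ + θ₁ + ℏ`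
transforms into the Hamiltonian flow of the Painlevé 4 Hamiltonian
`Ham^{P4}(Q̌,P̌) = (Q̌-X̃₁)P̌² + ℏP̌ - Q̌³ + X̃₁Q̌²
  - (s_{∞⁽¹⁾,0} - s_{∞⁽²⁾,0} - ℏ)Q̌ - (s_{X₁⁽¹⁾,0} - s_{X₁⁽²⁾,0})²/(4(Q̌ - X̃₁))`,
i.e. `ℏ∂_{X̃₁}Q̌ = ∂Ham^{P4}/∂P̌` and `ℏ∂_{X̃₁}P̌ = -∂Ham^{P4}/∂Q̌`. -/
theorem dual_reduced_hamiltonian_flow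
    (hbar θ1 θ2 sX1 sX2 sI1 sI2 : ℂ)
    (hmonoX : (sX1 - sX2) ^ 2 = θ2 ^ 2)
    (hmonoI : sI1 - sI2 = -θ2 - 2 * θ1)
    (qc pc Qc Pc : ℂ → ℂ)
    (hqdiff : Differentiable ℂ qc) (hpdiff : Differentiable ℂ pc)
    (hQdiff : Differentiable ℂ Qc) (hPdiff : Differentiable ℂ Pc)
    (hqne : ∀ τ : ℂ, qc τ ≠ 0)
    (hflowq : ∀ τ : ℂ,
      hbar * deriv qc τ = -2 * qc τ * pc τ - (qc τ)^2 + τ * qc τ + θ2)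
    (hflowp : ∀ τ : ℂ,
      hbar * deriv pc τ = (pc τ)^2 + 2 * qc τ * pc τ - τ * pc τ + θ1 + hbar)
    (hchangeQ : ∀ X : ℂ,
      qc ((Real.sqrt 2 : ℂ) * X) = -(Real.sqrt 2 : ℂ) * (Qc X - X))
    (hchangeP : ∀ X : ℂ,
      pc ((Real.sqrt 2 : ℂ) * X)
        = -(1 / (Real.sqrt 2 : ℂ)) * (Pc X - Qc X + θ2 / (2 * (Qc X - X)))) :
    ∀ X : ℂ,
      hbar * deriv Qc X = 2 * (Qc X - X) * Pc X + hbar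
      ∧ hbar * deriv Pc X
          = -(Pc X)^2 + 3 * (Qc X)^2 - 2 * X * Qc X + ((sI1 - sI2) - hbar)
            - (sX1 - sX2)^2 / (4 * (Qc X - X)^2) := by
  intro X
  set s2 : ℂ := (Real.sqrt 2 : ℂ) with hs2def
  have hs2sq : s2 * s2 = 2 := by
    rw [hs2def, ← Complex.ofReal_mul, Real.mul_self_sqrt (by norm_num : (0:ℝ) ≤ 2)]
    norm_num
  have hs2ne : s2 ≠ 0 := by
    intro h
    rw [h] at hs2sq
    norm_num at hs2sq
  have hp2 : s2 ^ 2 = 2 := by linear_combination hs2sq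
  have hp3 : s2 ^ 3 = 2 * s2 := by linear_combination s2 * hs2sq
  have hp4 : s2 ^ 4 = 4 := by linear_combination (s2 ^ 2 + 2) * hs2sq
  have hp5 : s2 ^ 5 = 4 * s2 := by linear_combination (s2 ^ 3 + 2 * s2) * hs2sq
  have hp6 : s2 ^ 6 = 8 := by linear_combination (s2 ^ 4 + 2 * s2 ^ 2 + 4) * hs2sq
  have hp7 : s2 ^ 7 = 8 * s2 := by
    linear_combination (s2 ^ 5 + 2 * s2 ^ 3 + 4 * s2) * hs2sq
  have hp8 : s2 ^ 8 = 16 := by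
    linear_combination (s2 ^ 6 + 2 * s2 ^ 4 + 4 * s2 ^ 2 + 8) * hs2sq
  have hp9 : s2 ^ 9 = 16 * s2 := by
    linear_combination (s2 ^ 7 + 2 * s2 ^ 5 + 4 * s2 ^ 3 + 8 * s2) * hs2sq
  have hp10 : s2 ^ 10 = 32 := by
    linear_combination (s2 ^ 8 + 2 * s2 ^ 6 + 4 * s2 ^ 4 + 8 * s2 ^ 2 + 16) * hs2sq
  have hp11 : s2 ^ 11 = 32 * s2 := by
    linear_combination (s2 ^ 9 + 2 * s2 ^ 7 + 4 * s2 ^ 5 + 8 * s2 ^ 3 + 16 * s2) * hs2sq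
  have hp12 : s2 ^ 12 = 64 := by
    linear_combination
      (s2 ^ 10 + 2 * s2 ^ 8 + 4 * s2 ^ 6 + 8 * s2 ^ 4 + 16 * s2 ^ 2 + 32) * hs2sq
  set τ : ℂ := s2 * X with hτ
  have hqX : qc τ = -s2 * (Qc X - X) := hchangeQ X
  have hqXne : qc τ ≠ 0 := hqne τ
  have hQXne : Qc X - X ≠ 0 := by
    intro h
    apply hqXne
    rw [hqX, h, mul_zero]
  -- Qc expressed via qc
  have hQeq : Qc = fun Y : ℂ => Y - qc (s2 * Y) / s2 := by
    funext Y
    rw [hchangeQ Y, neg_mul, neg_div, mul_div_cancel_left₀ _ hs2ne]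
    ring
  -- Pc expressed via qc, pc
  have hPeq : Pc = fun Y : ℂ => -s2 * pc (s2 * Y) + Y - qc (s2 * Y) / s2
      + θ2 / (s2 * qc (s2 * Y)) := by
    funext Y
    have hq := hchangeQ Y
    have hp := hchangeP Y
    have hqneY : qc (s2 * Y) ≠ 0 := hqne (s2 * Y)
    have hQYne : Qc Y - Y ≠ 0 := by
      intro h
      apply hqneY
      rw [hq, h, mul_zero]
    have e1 : -s2 * pc (s2 * Y) = Pc Y - Qc Y + θ2 / (2 * (Qc Y - Y)) := by
      rw [hp, show -s2 * (-(1 / s2) * (Pc Y - Qc Y + θ2 / (2 * (Qc Y - Y))))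
        = s2 / s2 * (Pc Y - Qc Y + θ2 / (2 * (Qc Y - Y))) by ring,
        div_self hs2ne, one_mul]
    have e2 : qc (s2 * Y) / s2 = -(Qc Y - Y) := by
      rw [hq, neg_mul, neg_div, mul_div_cancel_left₀ _ hs2ne]
    have e3 : θ2 / (s2 * qc (s2 * Y)) = -(θ2 / (2 * (Qc Y - Y))) := by
      rw [hq, show s2 * (-s2 * (Qc Y - Y)) = -(2 * (Qc Y - Y)) by
        linear_combination (-(Qc Y - Y)) * hs2sq, div_neg]
    simp only [e1, e2, e3]
    ring
  -- derivative of the inner map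
  have hinner : HasDerivAt (fun Z : ℂ => s2 * Z) s2 X := by
    simpa using (hasDerivAt_id X).const_mul s2
  have hqc' : HasDerivAt (fun Y : ℂ => qc (s2 * Y)) (deriv qc τ * s2) X :=
    ((hqdiff τ).hasDerivAt).comp X hinner
  have hpc' : HasDerivAt (fun Y : ℂ => pc (s2 * Y)) (deriv pc τ * s2) X :=
    ((hpdiff τ).hasDerivAt).comp X hinner
  -- derivative of Qc
  have hQ' : HasDerivAt Qc (1 - deriv qc τ * s2 / s2) X := by
    rw [hQeq]
    exact (hasDerivAt_id X).sub (hqc'.div_const s2)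
  have hderivQ : deriv Qc X = 1 - deriv qc τ := by
    rw [hQ'.deriv]
    field_simp
  -- derivative of Pc
  have hden' : HasDerivAt (fun Y : ℂ => s2 * qc (s2 * Y)) (s2 * (deriv qc τ * s2)) X :=
    hqc'.const_mul s2
  have hdenne : s2 * qc τ ≠ 0 := mul_ne_zero hs2ne hqXne
  have hfrac' : HasDerivAt (fun Y : ℂ => θ2 / (s2 * qc (s2 * Y)))
      ((0 * (s2 * qc τ) - θ2 * (s2 * (deriv qc τ * s2))) / (s2 * qc τ)^2) X :=
    (hasDerivAt_const X θ2).div hden' hdenne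
  have hP' : HasDerivAt Pc
      ((-s2 * (deriv pc τ * s2) + 1 - deriv qc τ * s2 / s2)
        + (0 * (s2 * qc τ) - θ2 * (s2 * (deriv qc τ * s2))) / (s2 * qc τ)^2) X := by
    rw [hPeq]
    exact (((hpc'.const_mul (-s2)).add (hasDerivAt_id X)).sub (hqc'.div_const s2)).add hfrac'
  -- values
  have hQval : Qc X = X - qc τ / s2 := by rw [hQeq]
  have hPval : Pc X = -s2 * pc τ + X - qc τ / s2 + θ2 / (s2 * qc τ) := by rw [hPeq]
  have hfq := hflowq τ
  have hfp := hflowp τ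
  constructor
  · have h1 : hbar * deriv Qc X = hbar - hbar * deriv qc τ := by
      rw [hderivQ]; ring
    rw [h1, hfq, hQval, hPval, hτ]
    have hq1 : qc (s2 * X) ≠ 0 := hqne (s2 * X)
    field_simp
    ring_nf
    simp only [hp2, hp3, hp4, hp5, hp6, hp7, hp8, hp9, hp10, hp11, hp12]
    ring
  · have h2 : hbar * deriv Pc X = -2 * (hbar * deriv pc τ) + hbar
        - (hbar * deriv qc τ) - θ2 * (hbar * deriv qc τ) / (qc τ)^2 := by
      rw [hP'.deriv]
      field_simp
      ring_nf
      simp only [hp2, hp3, hp4, hp5, hp6, hp7, hp8, hp9, hp10, hp11, hp12]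
      ring
    rw [h2, hfq, hfp, hQval, hPval, hmonoX, hmonoI, hτ]
    have hq2 : qc (s2 * X) ≠ 0 := hqne (s2 * X)
    field_simp
    ring_nf
    simp only [inv_pow, hp2, hp3, hp4, hp5, hp6, hp7, hp8, hp9, hp10, hp11, hp12]
    field_simp
    ring_nf
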